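/- Let f ∈ H^∞(T^∞) and ε > 0. Then ‖f·g‖_{L²(T^∞)} ≥ ε‖g‖_{L²(T^∞)} for every g ∈ H²(T^∞) if and only if |f(w)| ≥ ε for almost every w ∈ T^∞. -/

import Mathlib

open MeasureTheory ComplexConjugate Filter Set
open scoped ENNReal NNReal

noncomputable section

namespace DilationDirichlet

/-! ## The interval `(0,1)` and dilation systems -/

/-- Lebesgue measure restricted to the interval `(0,1)`. -/
def M01 : Measure ℝ := volume.restrict (Set.Ioo (0 : ℝ) 1)

/-- The odd, `2`-periodic extension to `ℝ` of a function defined on `(0,1)`. -/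
def oddExt (φ : ℝ → ℂ) (x : ℝ) : ℂ :=
  let y := x - 2 * (⌊x / 2⌋ : ℝ)
  if y ≤ 1 then φ y else -φ (2 - y)

/-- The dilation system `φ_n(x) = φ(n x)` of (the odd `2`-periodic extension of)
a function `φ ∈ L²(0,1)`. -/
def dilSys (φ : Lp ℂ 2 M01) (n : ℕ+) : ℝ → ℂ :=
  fun x => oddExt (⇑φ) ((n : ℕ) * x)

/-- The sine orthonormal basis `e_n(x) = √2 sin(π n x)` of `L²(0,1)`. -/
def esin (n : ℕ) (x : ℝ) : ℂ := ((Real.sqrt 2 * Real.sin (Real.pi * (n : ℝ) * x) : ℝ) : ℂ)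

/-- The `L²(0,1)` inner product `⟨f,g⟩ = ∫ f ḡ`, linear in the first variable. -/
def ip01 (f g : ℝ → ℂ) : ℂ := ∫ x, f x * conj (g x) ∂M01

/-- The Dirichlet series `S f = ∑ aₙ n^{-s}` associated to `f ∈ L²(0,1)`, recorded through its
coefficients `aₙ = ⟨f, eₙ⟩`, viewed as an arithmetic function (so that multiplication of
arithmetic functions is exactly the Dirichlet convolution of Dirichlet series). -/
def SAF (φ : Lp ℂ 2 M01) : ArithmeticFunction ℂ :=
  ⟨fun n => ip01 (⇑φ) (esin n), by simp [ip01, esin]⟩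

/-- Membership in the Hardy space `H²` of Dirichlet series: the coefficients are
square-summable. -/
def memH2AF (a : ArithmeticFunction ℂ) : Prop := Summable fun n : ℕ => ‖a n‖ ^ 2

/-- A Dirichlet series is a multiplier of `H²` when (Dirichlet-)multiplication by it
preserves `H²`. -/
def IsMultiplierAF (a : ArithmeticFunction ℂ) : Prop :=
  ∀ b : ArithmeticFunction ℂ, memH2AF b → memH2AF (a * b)

/-- `⟨f, φ_n⟩` for the dilation system of `φ`. -/
def dilCoef (φ f : Lp ℂ 2 M01) (n : ℕ+) : ℂ := ip01 (⇑f) (dilSys φ n)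

/-- The dilation system of `φ` is a Bessel sequence in `L²(0,1)`. -/
def IsBesselDil (φ : Lp ℂ 2 M01) : Prop :=
  ∃ B : ℝ, 0 < B ∧ ∀ f : Lp ℂ 2 M01,
    ∑' n : ℕ+, (‖dilCoef φ f n‖₊ : ℝ≥0∞) ^ 2 ≤ ENNReal.ofReal B * (‖f‖₊ : ℝ≥0∞) ^ 2

/-- The dilation system of `φ` satisfies the lower frame bound in `L²(0,1)`. -/
def HasLowerFrameDil (φ : Lp ℂ 2 M01) : Prop :=
  ∃ A : ℝ, 0 < A ∧ ∀ f : Lp ℂ 2 M01,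
    ENNReal.ofReal A * (‖f‖₊ : ℝ≥0∞) ^ 2 ≤ ∑' n : ℕ+, (‖dilCoef φ f n‖₊ : ℝ≥0∞) ^ 2

/-- The dilation system of `φ` is a frame for `L²(0,1)`. -/
def IsFrameDil (φ : Lp ℂ 2 M01) : Prop :=
  ∃ A B : ℝ, 0 < A ∧ A ≤ B ∧ ∀ f : Lp ℂ 2 M01,
    ENNReal.ofReal A * (‖f‖₊ : ℝ≥0∞) ^ 2 ≤ ∑' n : ℕ+, (‖dilCoef φ f n‖₊ : ℝ≥0∞) ^ 2 ∧
    ∑' n : ℕ+, (‖dilCoef φ f n‖₊ : ℝ≥0∞) ^ 2 ≤ ENNReal.ofReal B * (‖f‖₊ : ℝ≥0∞) ^ 2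

/-- `∑ |cₙ|²` for a finitely supported family of scalars. -/
def sqSum (c : ℕ+ →₀ ℂ) : ℝ := ∑ n ∈ c.support, ‖c n‖ ^ 2

/-- The finite linear combination `∑ cₙ φ_n` of the dilation system. -/
def comboDil (φ : Lp ℂ 2 M01) (c : ℕ+ →₀ ℂ) : ℝ → ℂ :=
  fun x => ∑ n ∈ c.support, c n * dilSys φ n x

/-- The `L²(0,1)` norm of a function. -/
def L2norm01 (g : ℝ → ℂ) : ℝ := Real.sqrt (∫ x, ‖g x‖ ^ 2 ∂M01)

/-- The dilation system of `φ` is a Riesz sequence in `L²(0,1)`. -/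
def IsRieszSeqDil (φ : Lp ℂ 2 M01) : Prop :=
  ∃ A B : ℝ, 0 < A ∧ A ≤ B ∧ ∀ c : ℕ+ →₀ ℂ,
    A * Real.sqrt (sqSum c) ≤ L2norm01 (comboDil φ c) ∧
    L2norm01 (comboDil φ c) ≤ B * Real.sqrt (sqSum c)

/-- The dilation system of `φ` is a Riesz basis for `L²(0,1)`: a Riesz sequence with dense
linear span. -/
def IsRieszBasisDil (φ : Lp ℂ 2 M01) : Prop :=
  IsRieszSeqDil φ ∧
    ∀ f : Lp ℂ 2 M01, ∀ ε : ℝ, 0 < ε →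
      ∃ c : ℕ+ →₀ ℂ, L2norm01 (fun x => f x - comboDil φ c x) < ε

/-- The dilation system of `φ` is an orthonormal sequence in `L²(0,1)`. -/
def IsOrthonormalDil (φ : Lp ℂ 2 M01) : Prop :=
  ∀ m n : ℕ+, ip01 (dilSys φ m) (dilSys φ n) = if m = n then 1 else 0

/-! ## The infinite torus `T^∞` -/

/-- The infinite torus `T^∞`, realized as a countable product of circles. -/
abbrev TInf := ℕ → AddCircle (1 : ℝ)

/-- The Haar probability measure on the infinite torus. -/
def muT : Measure TInf := Measure.addHaarMeasure ⊤

instance : IsProbabilityMeasure muT :=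
  ⟨by simpa [muT] using
    Measure.addHaarMeasure_self (K₀ := (⊤ : TopologicalSpace.PositiveCompacts TInf))⟩

/-- The monomial `w ↦ w^α` on `T^∞` associated with a finitely supported
multi-index `α ∈ ℤ^{(ℕ)}`. -/
def monoT (α : ℕ →₀ ℤ) (w : TInf) : ℂ := ∏ j ∈ α.support, fourier (α j) (w j)

/-- The Fourier coefficient `f̂(α) = ∫_{T^∞} f(w) w^{-α} dw`. -/
def fcoefT (f : TInf → ℂ) (α : ℕ →₀ ℤ) : ℂ := ∫ w, f w * conj (monoT α w) ∂muT

/-- The multi-index `α(n)` of exponents of the prime factorization `n = p^{α(n)}`,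
where the `j`-th coordinate corresponds to the `j`-th prime number. -/
def expIdx (n : ℕ) : ℕ →₀ ℤ :=
  ((Nat.factorization n).mapDomain (Nat.count Nat.Prime)).mapRange
    (fun k : ℕ => (k : ℤ)) (by simp)

/-- Membership in `H^∞(T^∞)`: essentially bounded and all Fourier coefficients with a negative
index vanish. -/
def memHinfT (f : TInf → ℂ) : Prop :=
  MemLp f ⊤ muT ∧ ∀ α : ℕ →₀ ℤ, (∃ j, α j < 0) → fcoefT f α = 0

/-- Membership in `H²(T^∞)`: square integrable and all Fourier coefficients with a negative
index vanish. -/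
def memH2T (f : TInf → ℂ) : Prop :=
  MemLp f 2 muT ∧ ∀ α : ℕ →₀ ℤ, (∃ j, α j < 0) → fcoefT f α = 0

/-- `f ∈ H²(T^∞)` is the Bohr lift of the Dirichlet series with coefficients `a`:
`f̂(α(n)) = aₙ` and all other Fourier coefficients vanish. -/
def IsBohrLiftOf (a : ArithmeticFunction ℂ) (f : TInf → ℂ) : Prop :=
  memH2T f ∧ (∀ n : ℕ+, fcoefT f (expIdx n) = a n) ∧
    ∀ α : ℕ →₀ ℤ, (∀ n : ℕ+, α ≠ expIdx n) → fcoefT f α = 0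

/-! ## `H²` as a Hilbert space of coefficient sequences -/

/-- The Hardy space `H²` of Dirichlet series, as the Hilbert space of square-summable
coefficient sequences. -/
abbrev H2sp := lp (fun _ : ℕ+ => ℂ) 2

/-- The (formal) Dirichlet series attached to an element of `H²`. -/
def toAF (E : H2sp) : ArithmeticFunction ℂ :=
  ⟨fun n => if h : 0 < n then E ⟨n, h⟩ else 0, by simp⟩

/-- The coefficient sequence of the Dirichlet series `n^{-s} * (∑ aₖ k^{-s})`:
Dirichlet convolution by `n^{-s}` shifts coefficients to multiples of `n`. -/
def shiftFun (n : ℕ+) (f : ℕ+ → ℂ) (k : ℕ+) : ℂ :=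
  if h : (n : ℕ) ∣ (k : ℕ) then
    f ⟨(k : ℕ) / (n : ℕ), Nat.div_pos (Nat.le_of_dvd k.2 h) n.2⟩
  else 0

lemma shiftFun_mul (n m : ℕ+) (f : ℕ+ → ℂ) : shiftFun n f (n * m) = f m := by
  have h : (n : ℕ) ∣ ((n * m : ℕ+) : ℕ) := ⟨m, by simp⟩
  rw [shiftFun, dif_pos h]
  congr 1
  apply Subtype.ext
  show ((n * m : ℕ+) : ℕ) / (n : ℕ) = (m : ℕ)
  rw [PNat.mul_coe]
  exact Nat.mul_div_cancel_left _ n.2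

lemma shiftFun_of_not_dvd {n k : ℕ+} (f : ℕ+ → ℂ) (h : ¬ (n : ℕ) ∣ (k : ℕ)) :
    shiftFun n f k = 0 := dif_neg h

lemma not_dvd_of_not_mem_range {n : ℕ+} {k : ℕ+}
    (hk : k ∉ Set.range (fun m : ℕ+ => n * m)) : ¬ (n : ℕ) ∣ (k : ℕ) := by
  intro hdvd
  obtain ⟨m, hm⟩ := hdvd
  have hm0 : 0 < m := by
    rcases Nat.eq_zero_or_pos m with h | h
    · subst h
      simp only [Nat.mul_zero] at hm
      exact absurd hm (Nat.pos_iff_ne_zero.mp k.2)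
    · exact h
  exact hk ⟨⟨m, hm0⟩, by apply Subtype.ext; exact hm.symm⟩

lemma mul_left_injective_pnat (n : ℕ+) : Function.Injective (fun m : ℕ+ => n * m) :=
  fun a b h => by
    apply Subtype.ext
    have : (n : ℕ) * a = (n : ℕ) * b := by
      have := congrArg (fun x : ℕ+ => (x : ℕ)) h
      simpa using this
    exact Nat.eq_of_mul_eq_mul_left n.2 this

lemma shiftFun_memℓp (n : ℕ+) (f : H2sp) : Memℓp (shiftFun n ⇑f) 2 := by
  apply memℓp_gen
  have hi := mul_left_injective_pnat n
  have hz : ∀ k : ℕ+, k ∉ Set.range (fun m : ℕ+ => n * m) →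
      ‖shiftFun n (⇑f) k‖ ^ (2 : ℝ≥0∞).toReal = 0 := by
    intro k hk
    rw [shiftFun_of_not_dvd _ (not_dvd_of_not_mem_range hk)]
    simp
  rw [← hi.summable_iff hz]
  have heq : ((fun k : ℕ+ => ‖shiftFun n (⇑f) k‖ ^ (2 : ℝ≥0∞).toReal) ∘
      (fun m : ℕ+ => n * m)) = fun m : ℕ+ => ‖f m‖ ^ (2 : ℝ≥0∞).toReal := by
    funext m
    simp [Function.comp, shiftFun_mul]
  rw [heq]
  exact (lp.memℓp f).summable (by norm_num)

/-- Dirichlet convolution by `n^{-s}` as a linear map on `H²`. -/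
def lamLin (n : ℕ+) : H2sp →ₗ[ℂ] H2sp where
  toFun f := ⟨shiftFun n ⇑f, shiftFun_memℓp n f⟩
  map_add' f g := by
    ext k
    show shiftFun n ⇑(f + g) k = shiftFun n ⇑f k + shiftFun n ⇑g k
    by_cases h : (n : ℕ) ∣ (k : ℕ) <;> simp [shiftFun, h] <;> rfl
  map_smul' c f := by
    ext k
    show shiftFun n ⇑(c • f) k = c • shiftFun n ⇑f k
    by_cases h : (n : ℕ) ∣ (k : ℕ) <;> simp [shiftFun, h] <;> rfl

lemma lamLin_coe (n : ℕ+) (f : H2sp) (k : ℕ+) : (lamLin n f) k = shiftFun n (⇑f) k := rfl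

lemma lamLin_norm (n : ℕ+) (f : H2sp) : ‖lamLin n f‖ = ‖f‖ := by
  rw [lp.norm_eq_tsum_rpow (by norm_num) (lamLin n f), lp.norm_eq_tsum_rpow (by norm_num) f]
  congr 1
  have hi := mul_left_injective_pnat n
  have hsupp : (Function.support fun k : ℕ+ => ‖(lamLin n f) k‖ ^ (2 : ℝ≥0∞).toReal) ⊆
      Set.range (fun m : ℕ+ => n * m) := by
    intro k hk
    by_contra hmem
    apply hk
    show ‖(lamLin n f) k‖ ^ (2 : ℝ≥0∞).toReal = 0
    rw [lamLin_coe, shiftFun_of_not_dvd _ (not_dvd_of_not_mem_range hmem)]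
    simp
  calc ∑' k : ℕ+, ‖(lamLin n f) k‖ ^ (2 : ℝ≥0∞).toReal
      = ∑' m : ℕ+, ‖(lamLin n f) (n * m)‖ ^ (2 : ℝ≥0∞).toReal :=
        (hi.tsum_eq (f := fun k : ℕ+ => ‖(lamLin n f) k‖ ^ (2 : ℝ≥0∞).toReal) hsupp).symm
    _ = ∑' m : ℕ+, ‖f m‖ ^ (2 : ℝ≥0∞).toReal := by
        refine tsum_congr fun m => ?_
        rw [lamLin_coe, shiftFun_mul]

/-- Dirichlet convolution by `n^{-s}`: the operator `Λ(n)` on `H²`. -/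
def lamOp (n : ℕ+) : H2sp →L[ℂ] H2sp :=
  (lamLin n).mkContinuous 1 (fun f => by rw [lamLin_norm]; simp)

/-- The restriction of an operator to an invariant subspace. -/
def restrictOp (T : H2sp →L[ℂ] H2sp) (I : Submodule ℂ H2sp)
    (h : ∀ x ∈ I, T x ∈ I) : I →L[ℂ] I :=
  { toFun := fun x => ⟨T x, h x x.2⟩
    map_add' := fun x y => Subtype.ext (by simp)
    map_smul' := fun c x => Subtype.ext (by simp)
    cont := Continuous.subtype_mk (T.continuous.comp continuous_subtype_val) _ }

/-- The Hilbert space adjoint of an operator on a closed subspace of `H²`. -/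
def adjOf {I : Submodule ℂ H2sp} (hcl : IsClosed (I : Set H2sp)) (T : I →L[ℂ] I) :
    I →L[ℂ] I :=
  haveI : CompleteSpace I := hcl.completeSpace_coe
  ContinuousLinearMap.adjoint T

/-! ## Dirichlet polynomials -/

/-- The Dirichlet series `m^{-s}` (coefficient `1` at `m`, `0` elsewhere). -/
def shiftAF (m : ℕ+) : ArithmeticFunction ℂ :=
  ⟨fun k => if k = (m : ℕ) then 1 else 0, by simp [Ne.symm m.ne_zero]⟩

/-- The constant Dirichlet series `c` (coefficient `c` at `1`, `0` elsewhere). -/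
def constAF (c : ℂ) : ArithmeticFunction ℂ :=
  ⟨fun k => if k = 1 then c else 0, by simp⟩

/-- The `i`-th prime number (`nthP 0 = 2`). -/
def nthP (i : ℕ) : ℕ+ := ⟨Nat.nth Nat.Prime i, (Nat.prime_nth_prime i).pos⟩

/-- The general term `aₙ w^{α(n)} n^{-(σ + it)}` of a vertical-limit Dirichlet series. -/
def dirTerm (a : ArithmeticFunction ℂ) (w : TInf) (t σ : ℝ) (n : ℕ+) : ℂ :=
  a n * monoT (expIdx n) w * ((n : ℕ) : ℂ) ^ (-((σ : ℂ) + (t : ℂ) * Complex.I))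

/-! ## The square `(0,1)²`, double Dirichlet series, and `T^∞ × T^∞` -/

/-- Lebesgue measure restricted to the square `(0,1)²`. -/
def M2 : Measure (ℝ × ℝ) := volume.restrict ((Set.Ioo (0 : ℝ) 1) ×ˢ (Set.Ioo (0 : ℝ) 1))

/-- The extension of a function on `(0,1)²` to `ℝ²`, odd and `2`-periodic in each variable. -/
def oddExt2 (φ : ℝ × ℝ → ℂ) (p : ℝ × ℝ) : ℂ :=
  oddExt (fun u => oddExt (fun v => φ (u, v)) p.2) p.1

/-- The double dilation system `φ_{m,n}(x,y) = φ(mx, ny)`. -/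
def dil2Sys (φ : Lp ℂ 2 M2) (m n : ℕ+) : ℝ × ℝ → ℂ :=
  fun p => oddExt2 (⇑φ) ((m : ℕ) * p.1, (n : ℕ) * p.2)

/-- The orthonormal basis `e_{m,n}(x,y) = 2 sin(πmx) sin(πny)` of `L²((0,1)²)`. -/
def esin2 (m n : ℕ) (p : ℝ × ℝ) : ℂ := esin m p.1 * esin n p.2

/-- The `L²((0,1)²)` inner product. -/
def ip2 (f g : ℝ × ℝ → ℂ) : ℂ := ∫ p, f p * conj (g p) ∂M2

/-- The coefficients `a_{m,n} = ⟨φ, e_{m,n}⟩` of the double Dirichlet series `S₂φ`. -/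
def SAF2 (φ : Lp ℂ 2 M2) (m n : ℕ) : ℂ := ip2 (⇑φ) (esin2 m n)

/-- Dirichlet convolution of double Dirichlet series (through their coefficients). -/
def conv2 (a b : ℕ → ℕ → ℂ) : ℕ → ℕ → ℂ := fun m n =>
  ∑ x ∈ m.divisorsAntidiagonal, ∑ y ∈ n.divisorsAntidiagonal, a x.1 y.1 * b x.2 y.2

/-- The unit for convolution of double Dirichlet series. -/
def one2 : ℕ → ℕ → ℂ := fun m n => if m = 1 ∧ n = 1 then 1 else 0

/-- Membership in `H²₂`: square-summable coefficients. -/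
def memH2sq (a : ℕ → ℕ → ℂ) : Prop := Summable fun q : ℕ+ × ℕ+ => ‖a q.1 q.2‖ ^ 2

/-- A double Dirichlet series is a multiplier of `H²₂`. -/
def IsMultiplier2 (a : ℕ → ℕ → ℂ) : Prop := ∀ b, memH2sq b → memH2sq (conv2 a b)

/-- The double dilation system of `φ` is a Bessel sequence in `L²((0,1)²)`. -/
def IsBessel2 (φ : Lp ℂ 2 M2) : Prop :=
  ∃ B : ℝ, 0 < B ∧ ∀ f : Lp ℂ 2 M2,
    ∑' q : ℕ+ × ℕ+, (‖ip2 (⇑f) (dil2Sys φ q.1 q.2)‖₊ : ℝ≥0∞) ^ 2 ≤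
      ENNReal.ofReal B * (‖f‖₊ : ℝ≥0∞) ^ 2

/-- The double dilation system of `φ` satisfies the lower frame bound in `L²((0,1)²)`. -/
def HasLowerFrame2 (φ : Lp ℂ 2 M2) : Prop :=
  ∃ A : ℝ, 0 < A ∧ ∀ f : Lp ℂ 2 M2,
    ENNReal.ofReal A * (‖f‖₊ : ℝ≥0∞) ^ 2 ≤
      ∑' q : ℕ+ × ℕ+, (‖ip2 (⇑f) (dil2Sys φ q.1 q.2)‖₊ : ℝ≥0∞) ^ 2

/-- `∑ |c_{m,n}|²` for a finitely supported family of scalars. -/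
def sqSum2 (c : (ℕ+ × ℕ+) →₀ ℂ) : ℝ := ∑ q ∈ c.support, ‖c q‖ ^ 2

/-- A finite linear combination of the double dilation system. -/
def combo2 (φ : Lp ℂ 2 M2) (c : (ℕ+ × ℕ+) →₀ ℂ) : ℝ × ℝ → ℂ :=
  fun p => ∑ q ∈ c.support, c q * dil2Sys φ q.1 q.2 p

/-- The `L²((0,1)²)` norm of a function. -/
def L2norm2 (g : ℝ × ℝ → ℂ) : ℝ := Real.sqrt (∫ p, ‖g p‖ ^ 2 ∂M2)

/-- The double dilation system of `φ` is a Riesz sequence in `L²((0,1)²)`. -/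
def IsRieszSeq2 (φ : Lp ℂ 2 M2) : Prop :=
  ∃ A B : ℝ, 0 < A ∧ A ≤ B ∧ ∀ c : (ℕ+ × ℕ+) →₀ ℂ,
    A * Real.sqrt (sqSum2 c) ≤ L2norm2 (combo2 φ c) ∧
    L2norm2 (combo2 φ c) ≤ B * Real.sqrt (sqSum2 c)

/-- Haar probability measure on `T^∞ × T^∞`. -/
def muT2 : Measure (TInf × TInf) := muT.prod muT

/-- Monomials on `T^∞ × T^∞`. -/
def mono2 (α β : ℕ →₀ ℤ) (p : TInf × TInf) : ℂ := monoT α p.1 * monoT β p.2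

/-- Fourier coefficients on `T^∞ × T^∞`. -/
def fcoef2 (f : TInf × TInf → ℂ) (α β : ℕ →₀ ℤ) : ℂ := ∫ p, f p * conj (mono2 α β p) ∂muT2

/-- Membership in `H^∞(T^∞ × T^∞)`. -/
def memHinfT2 (f : TInf × TInf → ℂ) : Prop :=
  MemLp f ⊤ muT2 ∧
    ∀ α β : ℕ →₀ ℤ, ((∃ j, α j < 0) ∨ (∃ j, β j < 0)) → fcoef2 f α β = 0

/-- Membership in `H²(T^∞ × T^∞)`. -/
def memH2T2 (f : TInf × TInf → ℂ) : Prop :=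
  MemLp f 2 muT2 ∧
    ∀ α β : ℕ →₀ ℤ, ((∃ j, α j < 0) ∨ (∃ j, β j < 0)) → fcoef2 f α β = 0

/-- `f ∈ H²(T^∞ × T^∞)` is the Bohr lift of the double Dirichlet series with
coefficients `a`. -/
def IsBohrLift2Of (a : ℕ → ℕ → ℂ) (f : TInf × TInf → ℂ) : Prop :=
  memH2T2 f ∧ (∀ m n : ℕ+, fcoef2 f (expIdx m) (expIdx n) = a m n) ∧
    ∀ α β : ℕ →₀ ℤ, (∀ m n : ℕ+, ¬(α = expIdx m ∧ β = expIdx n)) → fcoef2 f α β = 0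

/-- Interleaving bijection `ℕ ⊕ ℕ ≃ ℕ` used to interleave coordinates. -/
def interEquiv : ℕ ⊕ ℕ ≃ ℕ where
  toFun := Sum.elim (fun j => 2 * j) (fun j => 2 * j + 1)
  invFun := fun k => if k % 2 = 0 then Sum.inl (k / 2) else Sum.inr (k / 2)
  left_inv := by
    rintro (j | j)
    · dsimp only [Sum.elim_inl]
      rw [if_pos (Nat.mul_mod_right 2 j)]
      exact congrArg Sum.inl (by omega)
    · dsimp only [Sum.elim_inr]
      rw [if_neg (by omega)]
      exact congrArg Sum.inr (by omega)
  right_inv := by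
    intro k
    dsimp only
    by_cases h : k % 2 = 0
    · rw [if_pos h]
      simp only [Sum.elim_inl]
      omega
    · rw [if_neg h]
      simp only [Sum.elim_inr]
      omega

/-- The interleaving of two multi-indices: `(α, β) ↦ (α₁, β₁, α₂, β₂, …)`. -/
def interIdx (α β : ℕ →₀ ℤ) : ℕ →₀ ℤ :=
  Finsupp.equivMapDomain interEquiv (Finsupp.sumElim α β)

/-- The interleaving homeomorphism `T^∞ × T^∞ → T^∞`,
`((x_i), (y_i)) ↦ (x₁, y₁, x₂, y₂, …)`. -/
def interMap (p : TInf × TInf) : TInf :=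
  fun k => if k % 2 = 0 then p.1 (k / 2) else p.2 (k / 2)

/-! ## auxiliary lemmas -/

lemma monoT_eq_prod (α : ℕ →₀ ℤ) {s : Finset ℕ} (hs : α.support ⊆ s) (w : TInf) :
    monoT α w = ∏ j ∈ s, fourier (α j) (w j) := by
  rw [monoT]
  refine Finset.prod_subset hs fun j _ hj => ?_
  rw [Finsupp.notMem_support_iff.mp hj, fourier_zero]

lemma continuous_monoT (α : ℕ →₀ ℤ) : Continuous (monoT α) := by
  exact continuous_finset_prod _ fun j _ =>
    (fourier (α j)).continuous.comp (continuous_apply j)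

lemma norm_monoT (α : ℕ →₀ ℤ) (w : TInf) : ‖monoT α w‖ = 1 := by
  rw [monoT, norm_prod]
  exact Finset.prod_eq_one fun j _ => Circle.norm_coe _

lemma monoT_zero (w : TInf) : monoT 0 w = 1 := by simp [monoT]

lemma monoT_mul (α β : ℕ →₀ ℤ) (w : TInf) :
    monoT α w * monoT β w = monoT (α + β) w := by
  rw [monoT_eq_prod α (s := α.support ∪ β.support) Finset.subset_union_left w,
    monoT_eq_prod β (s := α.support ∪ β.support) Finset.subset_union_right w,
    monoT_eq_prod (α + β) (s := α.support ∪ β.support) Finsupp.support_add w,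
    ← Finset.prod_mul_distrib]
  refine Finset.prod_congr rfl fun j _ => ?_
  rw [Finsupp.add_apply, fourier_add]

lemma conj_monoT (α : ℕ →₀ ℤ) (w : TInf) : conj (monoT α w) = monoT (-α) w := by
  rw [monoT, map_prod, monoT, Finsupp.support_neg]
  exact Finset.prod_congr rfl fun j _ => by rw [Finsupp.neg_apply, fourier_neg]

lemma monoT_add_arg (α : ℕ →₀ ℤ) (x y : TInf) :
    monoT α (x + y) = monoT α x * monoT α y := by
  rw [monoT, monoT, monoT, ← Finset.prod_mul_distrib]
  refine Finset.prod_congr rfl fun j _ => ?_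
  have : (x + y) j = x j + y j := rfl
  rw [this, fourier_apply, smul_add, AddCircle.toCircle_add]
  simp [fourier_apply]

lemma memℒp_monoT (α : ℕ →₀ ℤ) (p : ℝ≥0∞) : MemLp (monoT α) p muT :=
  (memLp_top_of_bound (continuous_monoT α).aestronglyMeasurable 1
    (Eventually.of_forall fun w => (norm_monoT α w).le)).mono_exponent le_top

lemma integrable_monoT (α : ℕ →₀ ℤ) : Integrable (monoT α) muT :=
  memLp_one_iff_integrable.mp (memℒp_monoT α 1)

instance : muT.IsAddLeftInvariant := by unfold muT; infer_instance
instance : muT.Regular := by unfold muT; infer_instance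

lemma integral_monoT_ne_zero {α : ℕ →₀ ℤ} (hα : α ≠ 0) : ∫ w, monoT α w ∂muT = 0 := by
  obtain ⟨j, hj⟩ : ∃ j, α j ≠ 0 := by
    by_contra h
    push_neg at h
    exact hα (Finsupp.ext h)
  set y : TInf := fun k => if k = j then ((1 / 2 / (α j : ℝ) : ℝ) : AddCircle (1:ℝ)) else 0
    with hy
  have hyval : monoT α y = -1 := by
    rw [monoT, Finset.prod_eq_single j
      (fun k _ hk => by simp [hy, hk, fourier_zero])
      (fun h => absurd (Finsupp.mem_support_iff.mpr hj) h)]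
    have := fourier_add_half_inv_index (T := (1:ℝ)) hj one_pos (0 : AddCircle (1:ℝ))
    simp only [zero_add, fourier_zero] at this
    simpa [hy] using this
  have hinv : ∫ w, monoT α (y + w) ∂muT = ∫ w, monoT α w ∂muT :=
    integral_add_left_eq_self (μ := muT) (monoT α) y
  have : ∫ w, monoT α (y + w) ∂muT = monoT α y * ∫ w, monoT α w ∂muT := by
    rw [← integral_const_mul]
    exact integral_congr_ae (Eventually.of_forall fun w => monoT_add_arg α y w)
  rw [this, hyval] at hinv
  linear_combination (norm := ring_nf) (-1/2 : ℂ) * hinv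

lemma integral_monoT_mul_conj (α β : ℕ →₀ ℤ) :
    ∫ w, monoT α w * conj (monoT β w) ∂muT = if α = β then 1 else 0 := by
  have h : ∀ w, monoT α w * conj (monoT β w) = monoT (α + -β) w := fun w => by
    rw [conj_monoT, monoT_mul]
  rw [integral_congr_ae (Eventually.of_forall h)]
  by_cases hab : α = β
  · subst hab
    simp only [add_neg_cancel, if_pos rfl]
    rw [integral_congr_ae (Eventually.of_forall (monoT_zero))]
    simp
  · rw [if_neg hab, integral_monoT_ne_zero (fun h0 => hab (add_neg_eq_zero.mp h0))]

/-- trig polynomials -/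
def trigP {n : ℕ} (c : Fin n → ℂ) (A : Fin n → (ℕ →₀ ℤ)) : TInf → ℂ :=
  fun w => ∑ i, c i * monoT (A i) w

lemma memℒp_trigP {n : ℕ} (c : Fin n → ℂ) (A : Fin n → (ℕ →₀ ℤ)) (p : ℝ≥0∞) :
    MemLp (trigP c A) p muT := by
  have h : trigP c A = ∑ i : Fin n, (fun w => c i * monoT (A i) w) := by
    funext w
    simp [trigP]
  rw [h]
  exact memLp_finsetSum' _ fun i _ => (memℒp_monoT (A i) p).const_mul (c i)

lemma fcoefT_trigP {n : ℕ} (c : Fin n → ℂ) (A : Fin n → (ℕ →₀ ℤ)) (β : ℕ →₀ ℤ) :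
    fcoefT (trigP c A) β = ∑ i, c i * (if A i = β then 1 else 0) := by
  rw [fcoefT]
  have h : ∀ w, trigP c A w * conj (monoT β w) =
      ∑ i, c i * (monoT (A i) w * conj (monoT β w)) := fun w => by
    rw [trigP, Finset.sum_mul]
    exact Finset.sum_congr rfl fun i _ => by ring
  rw [integral_congr_ae (Eventually.of_forall h), integral_finset_sum]
  · exact Finset.sum_congr rfl fun i _ => by
      rw [integral_const_mul, integral_monoT_mul_conj]
  · intro i _
    have : Integrable (fun w => monoT (A i) w * conj (monoT β w)) muT := by
      refine (integrable_monoT (A i + -β)).congr ?_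
      exact Eventually.of_forall fun w => by dsimp only; rw [conj_monoT, monoT_mul]
    exact this.const_mul (c i)

lemma memH2T_trigP {n : ℕ} (c : Fin n → ℂ) (A : Fin n → (ℕ →₀ ℤ))
    (hA : ∀ i j, 0 ≤ A i j) : memH2T (trigP c A) := by
  refine ⟨memℒp_trigP c A 2, fun β hβ => ?_⟩
  obtain ⟨j, hj⟩ := hβ
  rw [fcoefT_trigP]
  refine Finset.sum_eq_zero fun i _ => ?_
  rw [if_neg, mul_zero]
  intro h
  exact absurd (h ▸ hA i j) (not_le.mpr hj)

/-! ## Stone–Weierstrass for monomials on `T^∞` -/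

def monoCM (α : ℕ →₀ ℤ) : C(TInf, ℂ) := ⟨monoT α, continuous_monoT α⟩

def monoSubalg : StarSubalgebra ℂ C(TInf, ℂ) where
  toSubalgebra := Algebra.adjoin ℂ (Set.range monoCM)
  star_mem' := by
    show Algebra.adjoin ℂ (Set.range monoCM) ≤ star (Algebra.adjoin ℂ (Set.range monoCM))
    refine Algebra.adjoin_le ?_
    rintro - ⟨α, rfl⟩
    refine Algebra.subset_adjoin ⟨-α, ?_⟩
    ext w
    show monoT (-α) w = conj (monoT α w)
    rw [conj_monoT]

lemma monoSubalg_coe :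
    Subalgebra.toSubmodule monoSubalg.toSubalgebra = Submodule.span ℂ (Set.range monoCM) := by
  apply Algebra.adjoin_eq_span_of_subset
  refine Subset.trans ?_ Submodule.subset_span
  intro x hx
  refine Submonoid.closure_induction (fun _ => id) ⟨0, ?_⟩ ?_ hx
  · ext w
    exact monoT_zero w
  · rintro - - - - ⟨α, rfl⟩ ⟨β, rfl⟩
    refine ⟨α + β, ?_⟩
    ext w
    exact (monoT_mul α β w).symm

lemma monoSubalg_separatesPoints : monoSubalg.SeparatesPoints := by
  intro x y hxy
  obtain ⟨j, hj⟩ : ∃ j, x j ≠ y j := by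
    by_contra h
    push_neg at h
    exact hxy (funext h)
  refine ⟨_, ⟨monoCM (Finsupp.single j 1), Algebra.subset_adjoin ⟨_, rfl⟩, rfl⟩, ?_⟩
  have hval : ∀ z : TInf, monoCM (Finsupp.single j 1) z = fourier 1 (z j) := by
    intro z
    show monoT _ z = _
    rw [monoT, Finsupp.support_single_ne_zero j one_ne_zero, Finset.prod_singleton,
      Finsupp.single_eq_same]
  dsimp only
  rw [hval, hval, fourier_one, fourier_one]
  intro h
  rw [Circle.coe_inj] at h
  exact hj (AddCircle.injective_toCircle one_ne_zero h)

lemma monoSubalg_closure_eq_top : monoSubalg.topologicalClosure = ⊤ :=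
  ContinuousMap.starSubalgebra_topologicalClosure_eq_top_of_separatesPoints _
    monoSubalg_separatesPoints

/-- uniform approximation of continuous functions by trig polynomials -/
lemma exists_trigP_close (b : C(TInf, ℂ)) {δ : ℝ} (hδ : 0 < δ) :
    ∃ (n : ℕ) (c : Fin n → ℂ) (A : Fin n → (ℕ →₀ ℤ)),
      ∀ w, ‖b w - trigP c A w‖ ≤ δ := by
  have hb : b ∈ closure (monoSubalg : Set C(TInf, ℂ)) := by
    have h1 : b ∈ monoSubalg.topologicalClosure := by
      rw [monoSubalg_closure_eq_top]
      trivial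
    exact h1
  obtain ⟨q, hq, hdist⟩ := Metric.mem_closure_iff.mp hb δ hδ
  have hq' : q ∈ Submodule.span ℂ (Set.range monoCM) := by
    rw [← monoSubalg_coe]
    exact hq
  obtain ⟨n, c, v, hrep⟩ := Submodule.mem_span_set'.mp hq'
  choose A hA using fun i => (v i).2
  refine ⟨n, c, A, fun w => ?_⟩
  have hqw : trigP c A w = q w := by
    rw [← hrep, ContinuousMap.coe_sum, Finset.sum_apply, trigP]
    refine Finset.sum_congr rfl fun i _ => ?_
    rw [← hA i]
    simp [monoCM, smul_eq_mul]
  rw [hqw]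
  have h2 : dist (b w) (q w) ≤ dist b q := ContinuousMap.dist_apply_le_dist w
  rw [dist_eq_norm] at h2
  exact h2.trans hdist.le

/-! ## key inequality extension -/

lemma ineq_trigP (f : TInf → ℂ) (ε : ℝ)
    (h : ∀ g : TInf → ℂ, memH2T g →
        ENNReal.ofReal ε * eLpNorm g 2 muT ≤ eLpNorm (fun w => f w * g w) 2 muT)
    {n : ℕ} (c : Fin n → ℂ) (A : Fin n → (ℕ →₀ ℤ)) :
    ENNReal.ofReal ε * eLpNorm (trigP c A) 2 muT ≤
      eLpNorm (fun w => f w * trigP c A w) 2 muT := by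
  set β : ℕ →₀ ℤ := ∑ i : Fin n, (A i).mapRange (fun z => max (-z) 0) (by simp) with hβ
  have hβval : ∀ j, β j = ∑ i : Fin n, max (-(A i j)) 0 := fun j => by
    rw [hβ, Finsupp.finset_sum_apply]
    exact Finset.sum_congr rfl fun i _ => by rw [Finsupp.mapRange_apply]
  have hβA : ∀ i j, 0 ≤ (β + A i) j := by
    intro i j
    rw [Finsupp.add_apply, hβval]
    have h1 : max (-(A i j)) 0 ≤ ∑ k : Fin n, max (-(A k j)) 0 :=
      Finset.single_le_sum (f := fun k => max (-(A k j)) 0)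
        (fun k _ => le_max_right _ _) (Finset.mem_univ i)
    have h2 : -(A i j) ≤ max (-(A i j)) 0 := le_max_left _ _
    linarith
  set g := trigP c (fun i => β + A i) with hg
  have hgw : ∀ w, g w = monoT β w * trigP c A w := by
    intro w
    rw [hg, trigP, trigP, Finset.mul_sum]
    refine Finset.sum_congr rfl fun i _ => ?_
    rw [show monoT β w * (c i * monoT (A i) w) = c i * (monoT β w * monoT (A i) w) by ring,
      monoT_mul]
  have h1 := h g (memH2T_trigP _ _ hβA)
  have e1 : eLpNorm g 2 muT = eLpNorm (trigP c A) 2 muT :=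
    eLpNorm_congr_norm_ae (Eventually.of_forall fun w => by
      rw [hgw w, norm_mul, norm_monoT, one_mul])
  have e2 : eLpNorm (fun w => f w * g w) 2 muT =
      eLpNorm (fun w => f w * trigP c A w) 2 muT :=
    eLpNorm_congr_norm_ae (Eventually.of_forall fun w => by
      rw [hgw w, show f w * (monoT β w * trigP c A w) = monoT β w * (f w * trigP c A w) by ring,
        norm_mul, norm_monoT, one_mul])
  rw [e1, e2] at h1
  exact h1

lemma ineq_all (f : TInf → ℂ) (hf : memHinfT f) (ε : ℝ)
    (h : ∀ g : TInf → ℂ, memH2T g →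
        ENNReal.ofReal ε * eLpNorm g 2 muT ≤ eLpNorm (fun w => f w * g w) 2 muT)
    (g : TInf → ℂ) (hg : MemLp g 2 muT) :
    ENNReal.ofReal ε * eLpNorm g 2 muT ≤ eLpNorm (fun w => f w * g w) 2 muT := by
  have hfm : AEStronglyMeasurable f muT := hf.1.aestronglyMeasurable
  have hgm : AEStronglyMeasurable g muT := hg.aestronglyMeasurable
  have hftop : eLpNorm f ∞ muT ≠ ∞ := hf.1.eLpNorm_ne_top
  refine ENNReal.le_of_forall_pos_le_add fun δ hδ hfin => ?_
  set K : ℝ≥0∞ := ENNReal.ofReal ε + eLpNorm f ∞ muT + 1 with hK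
  have hK0 : K ≠ 0 := by simp [hK]
  have hKtop : K ≠ ∞ := by
    simp only [hK]
    exact ENNReal.add_ne_top.mpr ⟨ENNReal.add_ne_top.mpr ⟨ENNReal.ofReal_ne_top, hftop⟩,
      ENNReal.one_ne_top⟩
  set t : ℝ := ((δ : ℝ≥0∞) / K).toReal with ht
  have htpos : 0 < t := by
    rw [ht]
    refine ENNReal.toReal_pos ?_ ?_
    · exact ENNReal.div_ne_zero.mpr ⟨by exact_mod_cast hδ.ne', hKtop⟩
    · exact (ENNReal.div_lt_top ENNReal.coe_ne_top hK0).ne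
  have htK : ENNReal.ofReal t * K ≤ (δ : ℝ≥0∞) := by
    rw [ht, ENNReal.ofReal_toReal (ENNReal.div_lt_top ENNReal.coe_ne_top hK0).ne]
    rw [ENNReal.div_mul_cancel hK0 hKtop]
  -- approximate g by a bounded continuous function, then by a trig polynomial
  obtain ⟨b, hb1, hb2⟩ := hg.exists_boundedContinuous_eLpNorm_sub_le (by norm_num)
    (ε := ENNReal.ofReal (t / 2)) (ENNReal.ofReal_pos.mpr (half_pos htpos)).ne'
  obtain ⟨n, c, A, hqb⟩ := exists_trigP_close b.toContinuousMap (half_pos htpos)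
  set q := trigP c A with hq
  have hqm : AEStronglyMeasurable q muT := (memℒp_trigP c A 2).aestronglyMeasurable
  have hbm : AEStronglyMeasurable (⇑b) muT := hb2.aestronglyMeasurable
  have hbq : eLpNorm (⇑b - q) 2 muT ≤ ENNReal.ofReal (t / 2) := by
    refine (eLpNorm_le_of_ae_bound (C := t / 2) (Eventually.of_forall fun w => ?_)).trans ?_
    · exact hqb w
    · simp [measure_univ]
  have hgq : eLpNorm (g - q) 2 muT ≤ ENNReal.ofReal t := by
    have : g - q = (g - ⇑b) + (⇑b - q) := by ring
    rw [this]
    refine (eLpNorm_add_le (hgm.sub hbm) (hbm.sub hqm) one_le_two).trans ?_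
    calc eLpNorm (g - ⇑b) 2 muT + eLpNorm (⇑b - q) 2 muT
        ≤ ENNReal.ofReal (t / 2) + ENNReal.ofReal (t / 2) := add_le_add hb1 hbq
      _ = ENNReal.ofReal t := by
          rw [← ENNReal.ofReal_add (by linarith) (by linarith)]
          norm_num
  -- the chain of inequalities
  have step1 : eLpNorm g 2 muT ≤ eLpNorm q 2 muT + ENNReal.ofReal t := by
    have : g = q + (g - q) := by ring
    nth_rewrite 1 [this]
    refine (eLpNorm_add_le hqm (hgm.sub hqm) one_le_two).trans ?_
    exact add_le_add_right hgq _
  have step2 : eLpNorm (fun w => f w * q w) 2 muT ≤ eLpNorm (fun w => f w * g w) 2 muT +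
      eLpNorm f ∞ muT * ENNReal.ofReal t := by
    have hsplit : (fun w => f w * q w) =
        (fun w => f w * g w) + (fun w => f w * (q w - g w)) := by
      funext w
      simp only [Pi.add_apply]
      ring
    rw [hsplit]
    refine (eLpNorm_add_le (hfm.mul hgm) (hfm.mul (hqm.sub hgm)) one_le_two).trans ?_
    refine add_le_add_right ?_ _
    refine (eLpNorm_le_eLpNorm_top_mul_eLpNorm 2 f (hqm.sub hgm) (· * ·) 1
      (Eventually.of_forall fun w => ?_)).trans ?_
    · rw [one_mul]
      exact le_of_eq (nnnorm_mul _ _)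
    · rw [ENNReal.coe_one, one_mul]
      refine mul_le_mul_right ?_ _
      rw [eLpNorm_sub_comm]
      exact hgq
  calc ENNReal.ofReal ε * eLpNorm g 2 muT
      ≤ ENNReal.ofReal ε * (eLpNorm q 2 muT + ENNReal.ofReal t) := mul_le_mul_right step1 _
    _ = ENNReal.ofReal ε * eLpNorm q 2 muT + ENNReal.ofReal ε * ENNReal.ofReal t := by
        rw [mul_add]
    _ ≤ eLpNorm (fun w => f w * q w) 2 muT + ENNReal.ofReal ε * ENNReal.ofReal t :=
        add_le_add_left (ineq_trigP f ε h c A) _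
    _ ≤ (eLpNorm (fun w => f w * g w) 2 muT + eLpNorm f ∞ muT * ENNReal.ofReal t) +
        ENNReal.ofReal ε * ENNReal.ofReal t := add_le_add_left step2 _
    _ = eLpNorm (fun w => f w * g w) 2 muT +
        (eLpNorm f ∞ muT + ENNReal.ofReal ε) * ENNReal.ofReal t := by ring
    _ ≤ eLpNorm (fun w => f w * g w) 2 muT + K * ENNReal.ofReal t := by
        refine add_le_add_right (mul_le_mul_left ?_ _) _
        rw [hK, add_comm (eLpNorm f ∞ muT) (ENNReal.ofReal ε)]
        exact le_self_add
    _ ≤ eLpNorm (fun w => f w * g w) 2 muT + ↑δ := by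
        refine add_le_add_right ?_ _
        rw [mul_comm]
        exact htK

lemma eLpNorm_real_const_mul (c : ℝ) (hc : 0 ≤ c) (g : TInf → ℂ) :
    eLpNorm (fun w => (c : ℂ) * g w) 2 muT = ENNReal.ofReal c * eLpNorm g 2 muT := by
  have hfun : (fun w => (c : ℂ) * g w) = (c : ℂ) • g := by
    funext w
    simp [smul_eq_mul]
  rw [hfun, eLpNorm_const_smul]
  congr 1
  rw [← ofReal_norm, Complex.norm_real, Real.norm_of_nonneg hc]


/-- for `f ∈ H^∞(T^∞)` and `ε > 0`: `‖fg‖_{L²} ≥ ε ‖g‖_{L²}` for all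
`g ∈ H²(T^∞)` iff `|f| ≥ ε` a.e. -/
theorem stmt_11 (f : TInf → ℂ) (hf : memHinfT f) (ε : ℝ) (hε : 0 < ε) :
    (∀ g : TInf → ℂ, memH2T g →
        ENNReal.ofReal ε * eLpNorm g 2 muT ≤ eLpNorm (fun w => f w * g w) 2 muT)
      ↔ ∀ᵐ w ∂muT, ε ≤ ‖f w‖ := by
  constructor
  · intro h
    have key := ineq_all f hf ε h
    obtain ⟨fm, hfm_meas, hfm_ae⟩ : ∃ fm, StronglyMeasurable fm ∧ f =ᵐ[muT] fm :=
      ⟨hf.1.aestronglyMeasurable.mk f, hf.1.aestronglyMeasurable.stronglyMeasurable_mk,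
        hf.1.aestronglyMeasurable.ae_eq_mk⟩
    set A : ℕ → Set TInf := fun n => {w | ‖fm w‖ ≤ ε - 1 / (n + 1)} with hA
    have hAmeas : ∀ n, MeasurableSet (A n) := fun n =>
      measurableSet_le hfm_meas.measurable.norm measurable_const
    have hAzero : ∀ n, muT (A n) = 0 := by
      intro n
      by_contra hpos
      set cst : ℝ := max (ε - 1 / (n + 1)) 0 with hcst
      have hc0 : (0 : ℝ) ≤ cst := le_max_right _ _
      have hcε : cst < ε := by
        rw [hcst]
        apply max_lt _ hε
        have hpos' : (0 : ℝ) < 1 / ((n : ℝ) + 1) := by positivity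
        linarith
      set g : TInf → ℂ := (A n).indicator (fun _ => (1 : ℂ)) with hgdef
      have hgmem : MemLp g 2 muT :=
        memLp_indicator_const 2 (hAmeas n) 1 (Or.inr (measure_ne_top _ _))
      have h1 := key g hgmem
      have hgn : eLpNorm g 2 muT = (muT (A n)) ^ (1 / (2 : ℝ)) := by
        rw [hgdef, eLpNorm_indicator_const (hAmeas n) two_ne_zero ENNReal.ofNat_ne_top]
        simp [ENNReal.toReal_ofNat]
      have hbound : ∀ᵐ w ∂muT, ‖f w * g w‖ ≤ ‖(cst : ℂ) * g w‖ := by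
        filter_upwards [hfm_ae] with w hw
        by_cases hwA : w ∈ A n
        · rw [hgdef]
          simp only [indicator_of_mem hwA, mul_one]
          rw [hw, Complex.norm_real, Real.norm_of_nonneg hc0]
          exact le_trans hwA (le_max_left _ _)
        · rw [hgdef]
          simp [indicator_of_notMem hwA]
      have h2 : eLpNorm (fun w => f w * g w) 2 muT ≤
          ENNReal.ofReal cst * eLpNorm g 2 muT := by
        refine (eLpNorm_mono_ae hbound).trans ?_
        rw [eLpNorm_real_const_mul cst hc0 g]
      have hcomb : ENNReal.ofReal ε * (muT (A n)) ^ (1 / (2 : ℝ)) ≤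
          ENNReal.ofReal cst * (muT (A n)) ^ (1 / (2 : ℝ)) := by
        rw [← hgn]
        exact h1.trans (h2.trans_eq (by rw [hgn]))
      have hne0 : (muT (A n)) ^ (1 / (2 : ℝ)) ≠ 0 := by
        simp only [ne_eq, ENNReal.rpow_eq_zero_iff, not_or]
        constructor
        · rintro ⟨h0, -⟩; exact hpos h0
        · rintro ⟨htop, -⟩; exact (measure_ne_top _ _) htop
      have hnetop : (muT (A n)) ^ (1 / (2 : ℝ)) ≠ ∞ := by
        refine ENNReal.rpow_ne_top_of_nonneg (by norm_num) (measure_ne_top _ _)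
      have : ENNReal.ofReal ε ≤ ENNReal.ofReal cst :=
        (ENNReal.mul_le_mul_iff_left hne0 hnetop).mp hcomb
      rw [ENNReal.ofReal_le_ofReal_iff hc0] at this
      linarith
    have hUzero : muT (⋃ n, A n) = 0 := measure_iUnion_null hAzero
    have hsub : {w | ‖fm w‖ < ε} ⊆ ⋃ n, A n := by
      intro w hw
      obtain ⟨n, hn⟩ := exists_nat_one_div_lt (show (0 : ℝ) < ε - ‖fm w‖ by
        simpa [sub_pos] using hw)
      refine mem_iUnion.mpr ⟨n, ?_⟩
      simp only [hA, mem_setOf_eq]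
      linarith
    have hlt0 : muT {w | ‖fm w‖ < ε} = 0 := measure_mono_null hsub hUzero
    have hae : ∀ᵐ w ∂muT, ε ≤ ‖fm w‖ := by
      rw [ae_iff]
      simpa only [not_le] using hlt0
    filter_upwards [hfm_ae, hae] with w h1 h2
    rw [h1]
    exact h2
  · intro h g hg
    have hbound : ∀ᵐ w ∂muT, ‖(ε : ℂ) * g w‖ ≤ ‖f w * g w‖ := by
      filter_upwards [h] with w hw
      rw [norm_mul, norm_mul, Complex.norm_real, Real.norm_of_nonneg hε.le]
      exact mul_le_mul_of_nonneg_right hw (norm_nonneg _)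
    have hmono := eLpNorm_mono_ae (p := 2) hbound
    rwa [eLpNorm_real_const_mul ε hε.le g] at hmono


end DilationDirichlet
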